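/- For ordinals γ, m, δ with γ, m, δ nonzero, m finite, and δ < ω^γ, the ordinals ω^γ·m + 1 and ω^γ·m + δ are biembeddable: each is homeomorphic to a subspace of the other (with subspace topologies induced from the order topology). -/

import Mathlib

open Set Ordinal
open scoped Cardinal

universe u

/-- Natural (Hessenberg) addition of ordinals, as `Ordinal.nadd` in the older Mathlib
(removed since). -/
noncomputable def Ordinal.nadd : Ordinal.{u} → Ordinal.{u} → Ordinal.{u}
  | a, b =>
    max (⨆ x : Iio a, Order.succ (Ordinal.nadd x.1 b)) (⨆ x : Iio b, Order.succ (Ordinal.nadd a x.1))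
termination_by a b => (a, b)
decreasing_by all_goals cases x; decreasing_tactic

infixl:65 " ♯ " => Ordinal.nadd

noncomputable section

/-- Derived set (non-isolated points) of a set of ordinals, as a subspace. -/
def deriv' (s : Set Ordinal.{0}) : Set Ordinal.{0} := {x ∈ s | x ∈ closure (s \ {x})}

/-- Iterated Cantor–Bendixson derivative. -/
def iterDeriv (s : Set Ordinal.{0}) (o : Ordinal.{0}) : Set Ordinal.{0} :=
  Ordinal.limitRecOn o s (fun _ ih => deriv' ih) (fun o _ ih => ⋂ (p : Ordinal.{0}) (h : p < o), ih p h)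

/-- `s` contains a homeomorphic copy of the ordinal `α` (with its order topology). -/
def HomeoCopy (α : Ordinal.{0}) (s : Set Ordinal.{0}) : Prop :=
  ∃ t : Set Ordinal, t ⊆ s ∧ Nonempty ((Iio α : Set Ordinal.{0}) ≃ₜ t)

/-- Two ordinals are biembeddable: each is homeomorphic to a subspace of the other. -/
def Biembed (α β : Ordinal.{0}) : Prop := HomeoCopy α (Iio β) ∧ HomeoCopy β (Iio α)

/-- Two sets of ordinals are order-homeomorphic: there is an order-preserving homeomorphism. -/
def OrderHomeo (X Y : Set Ordinal.{0}) : Prop :=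
  ∃ e : X ≃ₜ Y, ∀ a b : X, a ≤ b ↔ e a ≤ e b

/-- An ordinal is order-reinforcing. -/
def OrderReinforcing (α : Ordinal.{0}) : Prop :=
  ∀ X : Set Ordinal, Nonempty ((Iio α : Set Ordinal.{0}) ≃ₜ X) → ∃ Y ⊆ X, OrderHomeo (Iio α) Y

/-- The Cantor–Bendixson rank of an ordinal: the least exponent in its Cantor normal form. -/
def CB (x : Ordinal.{0}) : Ordinal := if x = 0 then 0 else sSup {γ | (ω : Ordinal.{0}) ^ γ ∣ x}

/-- The natural (Hessenberg) sum of a finite family of ordinals. -/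
def natSumFam {k : ℕ} (α : Fin k → Ordinal.{0}) : Ordinal := (List.ofFn α).foldr (· ♯ ·) 0

/-- The Milner–Rado sum of a finite family of ordinals. -/
def mrSumFam {k : ℕ} (α : Fin k → Ordinal.{0}) : Ordinal :=
  sInf {δ | ∀ β : Fin k → Ordinal, (∀ i, β i < α i) → δ ≠ natSumFam β}

/-- The topological pigeonhole relation `β → (top α i)¹` for finitely many colours. -/
def TopPH {k : ℕ} (β : Ordinal.{0}) (α : Fin k → Ordinal.{0}) : Prop :=
  ∀ c : Ordinal → Fin k, ∃ i, HomeoCopy (α i) (Iio β ∩ c ⁻¹' {i})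

/-- The topological pigeonhole relation with an arbitrary index type of colours. -/
def TopPHFam {ι : Type*} (β : Ordinal.{0}) (α : ι → Ordinal.{0}) : Prop :=
  ∀ c : Ordinal → ι, ∃ i, HomeoCopy (α i) (Iio β ∩ c ⁻¹' {i})

/-- `ω̄[γ, m]`: `ω ^ γ * m + 1` if `γ > 0`, and `m` if `γ = 0`. -/
def obar (γ : Ordinal.{0}) (m : ℕ) : Ordinal := if γ = 0 then (m : Ordinal.{0}) else ω ^ γ * m + 1

/-- `C` is closed and unbounded in `o`. -/
def IsClubIn (C : Set Ordinal.{0}) (o : Ordinal.{0}) : Prop :=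
  C ⊆ Iio o ∧ (∀ x < o, ∃ y ∈ C, x ≤ y) ∧
    ∀ x < o, x ≠ 0 → (∀ y < x, ∃ z ∈ C, y < z ∧ z < x) → x ∈ C

/-- `S` is stationary in `o`: it meets every club subset of `o`. -/
def StationaryIn (S : Set Ordinal.{0}) (o : Ordinal.{0}) : Prop :=
  ∀ C, IsClubIn C o → (S ∩ C).Nonempty



section Aux
open Filter Topology

/-- Left addition is continuous on ordinals. -/
lemma continuous_add_left' (c : Ordinal.{0}) : Continuous (c + · : Ordinal → Ordinal) :=
  ((Order.isNormal_iff_strictMono_and_continuous).1 (Ordinal.isNormal_add_right c)).2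

/-- Subtraction of `e + 1` is continuous at points above `e`. -/
lemma continuousAt_sub_aux {e x : Ordinal.{0}} (hx : e < x) :
    ContinuousAt (· - (e + 1)) x := by
  set d := e + 1 with hd
  have hdle : ∀ {y : Ordinal}, e < y → d ≤ y := fun {y} hy => by
    rw [hd, Ordinal.add_one_eq_succ]; exact Order.succ_le_iff.2 hy
  have hdx : d ≤ x := hdle hx
  rw [ContinuousAt, tendsto_order]
  constructor
  · intro p hp
    have hmem : x ∈ Ioi (d + p) := by
      have : d + p < d + (x - d) := (add_lt_add_iff_left d).2 hp
      rwa [Ordinal.add_sub_cancel_of_le hdx] at this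
    filter_upwards [isOpen_Ioi.mem_nhds hmem] with y hy
    have hdy : d ≤ y := le_trans (le_self_add : d ≤ d + p) (le_of_lt hy)
    have : d + p < d + (y - d) := by rwa [Ordinal.add_sub_cancel_of_le hdy]
    exact (add_lt_add_iff_left d).1 this
  · intro q hq
    have hmem : x ∈ Ioi e ∩ Iio (d + q) := by
      refine ⟨hx, ?_⟩
      have : d + (x - d) < d + q := (add_lt_add_iff_left d).2 hq
      rwa [Ordinal.add_sub_cancel_of_le hdx] at this
    filter_upwards [(isOpen_Ioi.inter isOpen_Iio).mem_nhds hmem] with y hy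
    have hdy : d ≤ y := hdle hy.1
    have : d + (y - d) < d + q := by rw [Ordinal.add_sub_cancel_of_le hdy]; exact hy.2
    exact (add_lt_add_iff_left d).1 this

end Aux

open Filter Topology

/-- `ω^γ·m + 1` and `ω^γ·m + δ` are biembeddable. -/
theorem biembed_omega_pow_mul_succ (γ m δ : Ordinal.{0}) (hγ : γ ≠ 0) (hm : m ≠ 0)
    (hmfin : m < ω) (hδ : δ ≠ 0) (hδlt : δ < ω ^ γ) :
    Biembed (ω ^ γ * m + 1) (ω ^ γ * m + δ) := by
  classical
  set α := ω ^ γ * m with hα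
  have hδ1 : (1 : Ordinal) ≤ δ := Ordinal.one_le_iff_ne_zero.2 hδ
  have hωlim : Order.IsSuccLimit (ω ^ γ : Ordinal) :=
    Ordinal.isSuccLimit_opow_left Ordinal.isSuccLimit_omega0 hγ
  have hωα : ω ^ γ ≤ α := Ordinal.le_mul_left _ (pos_iff_ne_zero.2 hm)
  set δ₁ := δ - 1 with hδ₁def
  have h1δ : (1 : Ordinal) + δ₁ = δ := Ordinal.add_sub_cancel_of_le hδ1
  have hδ₁δ : δ₁ ≤ δ := Ordinal.sub_le_self _ _
  have hδ₁ω : δ₁ < ω ^ γ := lt_of_le_of_lt hδ₁δ hδlt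
  set c := δ₁ + 1 with hc
  have hcω : c < ω ^ γ := by
    rw [hc, Ordinal.add_one_eq_succ]; exact hωlim.succ_lt hδ₁ω
  have hcα : c + α = α := by
    have hm1 : (1 : Ordinal) ≤ m := Ordinal.one_le_iff_ne_zero.2 hm
    have hmsplit : (1 : Ordinal) + (m - 1) = m := Ordinal.add_sub_cancel_of_le hm1
    have hαsplit : α = ω ^ γ + ω ^ γ * (m - 1) := by
      rw [hα, ← hmsplit, mul_add, mul_one, hmsplit]
    rw [hαsplit, ← add_assoc, Ordinal.add_omega0_opow hcω]
  have hαδ : α + δ = (α + 1) + δ₁ := by rw [add_assoc, h1δ]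
  have hδ₁α : δ₁ < α := lt_of_lt_of_le hδ₁ω hωα
  constructor
  · -- easy direction: Iio (α + 1) ⊆ Iio (α + δ)
    refine ⟨Iio (ω ^ γ * m + 1), ?_, ⟨Homeomorph.refl _⟩⟩
    exact Iio_subset_Iio ((add_le_add_iff_left _).2 hδ1)
  · -- hard direction
    set t : Set Ordinal := Iio δ₁ ∪ Icc c α with ht
    refine ⟨t, ?_, ?_⟩
    · rintro y (hy | hy)
      · exact lt_trans (lt_trans hy hδ₁α) (lt_add_one α)
      · exact lt_of_le_of_lt hy.2 (lt_add_one α)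
    · -- build the homeomorphism
      have hFmem : ∀ x : Ordinal, x < α + δ →
          (if x ≤ α then c + x else x - (α + 1)) ∈ t := by
        intro x hxδ
        by_cases hx : x ≤ α
        · simp only [if_pos hx]
          right
          exact ⟨(le_self_add : c ≤ c + x), by
            calc c + x ≤ c + α := (add_le_add_iff_left c).2 hx
            _ = α := hcα⟩
        · simp only [if_neg hx]
          left
          push_neg at hx
          have hx1 : α + 1 ≤ x := by
            rw [Ordinal.add_one_eq_succ]; exact Order.succ_le_iff.2 hx
          have : (α + 1) + (x - (α + 1)) < (α + 1) + δ₁ := by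
            rw [Ordinal.add_sub_cancel_of_le hx1, ← hαδ]; exact hxδ
          exact (add_lt_add_iff_left _).1 this
      have hGmem : ∀ y : Ordinal, y ∈ t →
          (if y < c then (α + 1) + y else y - c) < α + δ := by
        intro y hy
        by_cases h : y < c
        · simp only [if_pos h]
          rcases hy with hy | hy
          · rw [hαδ]; exact (add_lt_add_iff_left _).2 hy
          · exact absurd hy.1 (not_le.2 h)
        · simp only [if_neg h]
          exact lt_of_le_of_lt (le_trans (Ordinal.sub_le_self _ _)
            (by rcases hy with hy | hy
                · exact le_of_lt (lt_trans hy hδ₁α)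
                · exact hy.2))
            (lt_of_lt_of_le (lt_add_one α) ((add_le_add_iff_left α).2 hδ1))
      set F : (Iio (α + δ) : Set Ordinal) → t :=
        fun x => ⟨if x.1 ≤ α then c + x.1 else x.1 - (α + 1), hFmem x.1 x.2⟩ with hF
      set G : t → (Iio (α + δ) : Set Ordinal) :=
        fun y => ⟨if y.1 < c then (α + 1) + y.1 else y.1 - c, hGmem y.1 y.2⟩ with hG
      have hGF : ∀ x, G (F x) = x := by
        rintro ⟨x, hx⟩
        apply Subtype.ext
        by_cases h : x ≤ α
        · have h1 : ¬ (c + x < c) := not_lt.2 (le_self_add : c ≤ c + x)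
          simp only [hF, hG, if_pos h, if_neg h1, Ordinal.add_sub_cancel]
        · push_neg at h
          have hx1 : α + 1 ≤ x := by
            rw [Ordinal.add_one_eq_succ]; exact Order.succ_le_iff.2 h
          have hlt : x - (α + 1) < δ₁ := by
            have : (α + 1) + (x - (α + 1)) < (α + 1) + δ₁ := by
              rw [Ordinal.add_sub_cancel_of_le hx1, ← hαδ]; exact hx
            exact (add_lt_add_iff_left _).1 this
          have h2 : x - (α + 1) < c := lt_trans hlt (lt_add_one δ₁)
          simp only [hF, hG, if_neg (not_le.2 h), if_pos h2,
            Ordinal.add_sub_cancel_of_le hx1]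
      have hFG : ∀ y, F (G y) = y := by
        rintro ⟨y, hy⟩
        apply Subtype.ext
        by_cases h : y < c
        · have h1 : ¬ ((α + 1) + y ≤ α) :=
            not_le.2 (lt_of_lt_of_le (lt_add_one α) (le_self_add : α + 1 ≤ (α + 1) + y))
          simp only [hF, hG, if_pos h, if_neg h1, Ordinal.add_sub_cancel]
        · push_neg at h
          have hyα : y ≤ α := by
            rcases hy with hy' | hy'
            · exact absurd (lt_trans hy' (lt_add_one δ₁)) (not_lt.2 h)
            · exact hy'.2
          have h1 : y - c ≤ α := le_trans (Ordinal.sub_le_self _ _) hyα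
          simp only [hF, hG, if_neg (not_lt.2 h), if_pos h1,
            Ordinal.add_sub_cancel_of_le h]
      have hFcont : Continuous F := by
        apply Continuous.subtype_mk
        rw [continuous_iff_continuousAt]
        rintro ⟨x, hx⟩
        by_cases h : x ≤ α
        · have hU : IsOpen {y : (Iio (α + δ) : Set Ordinal) | y.1 < α + 1} :=
            isOpen_Iio.preimage continuous_subtype_val
          have hxU : (⟨x, hx⟩ : (Iio (α + δ) : Set Ordinal)) ∈
              {y : (Iio (α + δ) : Set Ordinal) | y.1 < α + 1} :=
            lt_of_le_of_lt h (lt_add_one α)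
          have hcongr : (fun y : (Iio (α + δ) : Set Ordinal) =>
              if y.1 ≤ α then c + y.1 else y.1 - (α + 1)) =ᶠ[𝓝 ⟨x, hx⟩]
              fun y => c + y.1 := by
            filter_upwards [hU.mem_nhds hxU] with y hy
            have : y.1 ≤ α := by
              rw [Ordinal.add_one_eq_succ] at hy; exact Order.lt_succ_iff.1 hy
            simp [this]
          exact ContinuousAt.congr
            (((continuous_add_left' c).comp continuous_subtype_val).continuousAt)
            hcongr.symm
        · push_neg at h
          have hU : IsOpen {y : (Iio (α + δ) : Set Ordinal) | α < y.1} :=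
            isOpen_Ioi.preimage continuous_subtype_val
          have hcongr : (fun y : (Iio (α + δ) : Set Ordinal) =>
              if y.1 ≤ α then c + y.1 else y.1 - (α + 1)) =ᶠ[𝓝 ⟨x, hx⟩]
              fun y => y.1 - (α + 1) := by
            filter_upwards [hU.mem_nhds h] with y hy
            simp [not_le.2 hy]
          have hca : ContinuousAt (fun y : (Iio (α + δ) : Set Ordinal) => y.1 - (α + 1)) ⟨x, hx⟩ :=
            ContinuousAt.comp (g := fun y : Ordinal => y - (α + 1)) (x := (⟨x, hx⟩ : (Iio (α + δ) : Set Ordinal)))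
              (continuousAt_sub_aux h) continuous_subtype_val.continuousAt
          exact ContinuousAt.congr hca hcongr.symm
      have hGcont : Continuous G := by
        apply Continuous.subtype_mk
        rw [continuous_iff_continuousAt]
        rintro ⟨y, hy⟩
        by_cases h : y < c
        · have hU : IsOpen {z : t | z.1 < c} := isOpen_Iio.preimage continuous_subtype_val
          have hcongr : (fun z : t => if z.1 < c then (α + 1) + z.1 else z.1 - c)
              =ᶠ[𝓝 ⟨y, hy⟩] fun z => (α + 1) + z.1 := by
            filter_upwards [hU.mem_nhds h] with z hz
            simp [hz]
          exact ContinuousAt.congr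
            (((continuous_add_left' (α + 1)).comp continuous_subtype_val).continuousAt)
            hcongr.symm
        · push_neg at h
          have hyδ₁ : δ₁ < y := lt_of_lt_of_le (lt_add_one δ₁) h
          have hU : IsOpen {z : t | δ₁ < z.1} := isOpen_Ioi.preimage continuous_subtype_val
          have hcongr : (fun z : t => if z.1 < c then (α + 1) + z.1 else z.1 - c)
              =ᶠ[𝓝 ⟨y, hy⟩] fun z => z.1 - c := by
            filter_upwards [hU.mem_nhds hyδ₁] with z hz
            have : ¬ (z.1 < c) := by
              rcases z.2 with hz' | hz'
              · exact absurd hz' (not_lt.2 (le_of_lt hz))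
              · exact not_lt.2 hz'.1
            simp [this]
          have hca : ContinuousAt (fun z : t => z.1 - c) ⟨y, hy⟩ :=
            ContinuousAt.comp (g := fun z : Ordinal => z - c) (x := (⟨y, hy⟩ : t))
              (continuousAt_sub_aux hyδ₁) continuous_subtype_val.continuousAt
          exact ContinuousAt.congr hca hcongr.symm
      exact ⟨⟨⟨F, G, hGF, hFG⟩, hFcont, hGcont⟩⟩

end
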